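/- Let X = S¹ × S¹ and A = {(x,x) : x ∈ S¹} be the diagonal. Then srelcat(X,A) = 1. -/

import Mathlib

open Set unitInterval

section Defs

variable {X : Type*} {Y : Type*} [TopologicalSpace X] [TopologicalSpace Y]

/-- The restriction of `f` to `V` is null-homotopic. -/
def NullhomotopicOn (f : X → Y) (V : Set X) : Prop :=
  ∃ (H : C(unitInterval × ↥V, Y)) (y : Y),
    (∀ x : ↥V, H (1, x) = f x) ∧ (∀ x : ↥V, H (0, x) = y)

/-- The restriction of `f` to `V` is homotopic to a map with values in `A`. -/
def DeformsIntoOn (f : X → Y) (V : Set X) (A : Set Y) : Prop :=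
  ∃ H : C(unitInterval × ↥V, Y),
    (∀ x : ↥V, H (1, x) = f x) ∧ (∀ x : ↥V, H (0, x) ∈ A)

/-- There is a homotopy of pairs `(V × I, (V ∩ A) × I) → (Y, B)` ending at `f|_V`
and starting at a map into `B`. -/
def RelPairDeform (f : X → Y) (V A : Set X) (B : Set Y) : Prop :=
  ∃ H : C(unitInterval × ↥V, Y),
    (∀ x : ↥V, H (1, x) = f x) ∧ (∀ x : ↥V, H (0, x) ∈ B) ∧
    (∀ (t : unitInterval) (x : ↥V), (x : X) ∈ A → H (t, x) ∈ B)

/-- `relcat f A B ≤ n` : covering by `n+1` open sets as in the definition of the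
relative category of a map of pairs `f : (X,A) → (Y,B)`. -/
def relcatLE (f : X → Y) (A : Set X) (B : Set Y) (n : ℕ) : Prop :=
  ∃ V : Fin (n + 1) → Set X, (∀ i, IsOpen (V i)) ∧ (⋃ i, V i) = Set.univ ∧
    A ⊆ V 0 ∧ (∀ i, i ≠ 0 → NullhomotopicOn f (V i)) ∧ RelPairDeform f (V 0) A B

/-- The relative category of a map of pairs `f : (X,A) → (Y,B)` (`⊤` if none exists). -/
noncomputable def relcat (f : X → Y) (A : Set X) (B : Set Y) : ℕ∞ :=
  sInf {n : ℕ∞ | ∃ m : ℕ, n = (m : ℕ∞) ∧ relcatLE f A B m}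

/-- `qscat f A ≤ n` : covering by `n+1` open sets on each of which `f` deforms into `A`. -/
def qscatLE (f : X → Y) (A : Set Y) (n : ℕ) : Prop :=
  ∃ V : Fin (n + 1) → Set X, (∀ i, IsOpen (V i)) ∧ (⋃ i, V i) = Set.univ ∧
    ∀ i, DeformsIntoOn f (V i) A

/-- The quasi-strong LS category of a map of pairs `f : (B,C) → (X,A)`. -/
noncomputable def qscat (f : X → Y) (A : Set Y) : ℕ∞ :=
  sInf {n : ℕ∞ | ∃ m : ℕ, n = (m : ℕ∞) ∧ qscatLE f A m}

/-- The restriction of `f : (X,C) → (Y,A)` to `(V, V ∩ C)` is strongly relatively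
inessential. -/
def StronglyRelInessentialOn (f : X → Y) (V C : Set X) (A : Set Y) : Prop :=
  ∃ H : C(unitInterval × ↥V, Y),
    (∀ x : ↥V, H (1, x) = f x) ∧ (∀ x : ↥V, H (0, x) ∈ A) ∧
    (∀ (t : unitInterval) (x : ↥V), (x : X) ∈ C → H (t, x) = f x)

/-- `srelcat f C A ≤ n`. -/
def srelcatLE (f : X → Y) (C : Set X) (A : Set Y) (n : ℕ) : Prop :=
  ∃ V : Fin (n + 1) → Set X, (∀ i, IsOpen (V i)) ∧ (⋃ i, V i) = Set.univ ∧
    ∀ i, StronglyRelInessentialOn f (V i) C A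

/-- The strong relative LS category of a map of pairs `f : (B,C) → (X,A)`. -/
noncomputable def srelcat (f : X → Y) (C : Set X) (A : Set Y) : ℕ∞ :=
  sInf {n : ℕ∞ | ∃ m : ℕ, n = (m : ℕ∞) ∧ srelcatLE f C A m}

/-- `catMap f ≤ n` : covering by `n+1` open sets on each of which `f` is null-homotopic. -/
def catMapLE (f : X → Y) (n : ℕ) : Prop :=
  ∃ V : Fin (n + 1) → Set X, (∀ i, IsOpen (V i)) ∧ (⋃ i, V i) = Set.univ ∧
    ∀ i, NullhomotopicOn f (V i)

/-- The LS category of a map. -/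
noncomputable def catMap (f : X → Y) : ℕ∞ :=
  sInf {n : ℕ∞ | ∃ m : ℕ, n = (m : ℕ∞) ∧ catMapLE f m}

end Defs

/-- The `n`-th (higher) topological complexity of a map `f : X → Y`:
`qscat` of the induced map of pairs `(Xⁿ, Δₙ(X)) → (Yⁿ, Δₙ(Y))`. -/
noncomputable def TCmap (n : ℕ) {X Y : Type*} [TopologicalSpace X] [TopologicalSpace Y]
    (f : X → Y) : ℕ∞ :=
  qscat (fun x : Fin n → X => fun i => f (x i)) {y : Fin n → Y | ∀ i j, y i = y j}

section Aux

open Complex ComplexConjugate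

private lemma aux_slit {z : ℂ} (hz : ‖z‖ = 1) (h : z ≠ -1) :
    z ∈ Complex.slitPlane := by
  rw [Complex.mem_slitPlane_iff]
  by_contra hc
  push_neg at hc
  obtain ⟨h1, h2⟩ := hc
  have hzre : z = (z.re : ℂ) := Complex.ext rfl (by simp [h2])
  have : |z.re| = 1 := by
    have := hz
    rw [hzre] at this
    simpa using this
  rcases (abs_eq (by norm_num : (0:ℝ) ≤ 1)).mp this with hre | hre
  · linarith
  · exact h (by rw [hzre, hre]; norm_num)
    
private lemma aux_exp_arg {z : ℂ} (hz : ‖z‖ = 1) :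
    Complex.exp (z.arg * Complex.I) = z := by
  have := Complex.norm_mul_exp_arg_mul_I z
  rwa [hz, Complex.ofReal_one, one_mul] at this

private lemma aux_unit_mul_conj {z : ℂ} (hz : ‖z‖ = 1) :
    z * conj z = 1 := by
  rw [Complex.mul_conj, Complex.normSq_eq_norm_sq, hz]
  norm_num

private lemma aux_telescope (b : ℕ → ℂ) (hb : ∀ k, b k * conj (b k) = 1) (N : ℕ) :
    ∏ k ∈ Finset.range N, (b (k + 1) * conj (b k)) = b N * conj (b 0) := by
  induction N with
  | zero => simp [hb 0]
  | succ n ih =>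
      rw [Finset.prod_range_succ, ih]
      have := hb n
      calc b n * conj (b 0) * (b (n + 1) * conj (b n))
          = b (n + 1) * conj (b 0) * (b n * conj (b n)) := by ring
        _ = b (n + 1) * conj (b 0) := by rw [hb n, mul_one]

end Aux

open Complex ComplexConjugate in
private lemma aux_no_null (F : C(unitInterval × ↥(Metric.sphere (0 : ℂ) 1), ℂ))
    (habs : ∀ q, ‖F q‖ = 1)
    (hF1 : ∀ u, F (1, u) = (u : ℂ))
    (hF0 : ∀ u, F (0, u) = 1) : False := by
  obtain ⟨δ, hδpos, hδ⟩ := Metric.uniformContinuous_iff.mp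
    (CompactSpace.uniformContinuous_of_continuous F.continuous) 2 two_pos
  obtain ⟨n, hn⟩ := exists_nat_one_div_lt hδpos
  set N : ℕ := n + 1 with hN
  have hNpos : (0 : ℝ) < (N : ℝ) := by positivity
  set t : ℕ → unitInterval := fun k =>
    ⟨min ((k : ℝ) / N) 1, le_min (by positivity) zero_le_one, min_le_right _ _⟩ with ht
  have htval : ∀ k ≤ N, (t k : ℝ) = (k : ℝ) / N := by
    intro k hk
    exact min_eq_left (by rw [div_le_one hNpos]; exact_mod_cast hk)
  have ht0 : t 0 = 0 := Subtype.ext (by simp [ht])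
  have htN : t N = 1 := by
    apply Subtype.ext
    have h' := htval N le_rfl
    rw [h', div_self hNpos.ne']
    rfl
  have hdist : ∀ k < N, ∀ u, dist (F (t (k + 1), u)) (F (t k, u)) < 2 := by
    intro k hk u
    apply hδ
    have h1 : dist (t (k + 1)) (t k) = 1 / (N : ℝ) := by
      rw [Subtype.dist_eq, Real.dist_eq, htval (k + 1) hk, htval k hk.le,
        div_sub_div_same]
      have h'' : ((k + 1 : ℕ) : ℝ) - ((k : ℕ) : ℝ) = 1 := by push_cast; ring
      rw [h'', abs_div, abs_one, abs_of_pos hNpos]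
    calc dist ((t (k + 1), u) : unitInterval × ↥(Metric.sphere (0 : ℂ) 1)) (t k, u)
        = max (dist (t (k + 1)) (t k)) (dist u u) := Prod.dist_eq
      _ = 1 / (N : ℝ) := by rw [h1, dist_self]; exact max_eq_left (by positivity)
      _ < δ := by rw [hN]; push_cast; exact_mod_cast hn
  set ρ : ℕ → ↥(Metric.sphere (0 : ℂ) 1) → ℂ :=
    fun k u => F (t (k + 1), u) * conj (F (t k, u)) with hρ
  have hρabs : ∀ k u, ‖ρ k u‖ = 1 := by
    intro k u
    rw [hρ]
    simp [map_mul, habs]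
  have hρslit : ∀ k, k < N → ∀ u, ρ k u ∈ Complex.slitPlane := by
    intro k hk u
    apply aux_slit (hρabs k u)
    intro heq
    have hb := aux_unit_mul_conj (habs (t k, u))
    have hab : F (t (k + 1), u) = -F (t k, u) := by
      have h2 := congrArg (· * F (t k, u)) heq
      simp only [hρ] at h2
      rw [mul_assoc, mul_comm (conj _) (F (t k, u)), hb, mul_one] at h2
      rw [h2]; ring
    have h3 : dist (F (t (k + 1), u)) (F (t k, u)) = 2 := by
      rw [Complex.dist_eq, hab]
      have : -F (t k, u) - F (t k, u) = (-2 : ℂ) * F (t k, u) := by ring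
      rw [this, norm_mul, habs]
      simp
    linarith [hdist k hk u]
  set h : ↥(Metric.sphere (0 : ℂ) 1) → ℝ :=
    fun u => ∑ k ∈ Finset.range N, (ρ k u).arg with hh
  have hFkcont : ∀ j : ℕ, Continuous fun u : ↥(Metric.sphere (0 : ℂ) 1) => F (t j, u) :=
    fun j => F.continuous.comp (continuous_const.prodMk continuous_id)
  have hρcont : ∀ k : ℕ, Continuous (ρ k) := by
    intro k
    exact (hFkcont (k + 1)).mul (Complex.continuous_conj.comp (hFkcont k))
  have hhcont : Continuous h := by
    rw [hh]
    apply continuous_finset_sum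
    intro k hk
    rw [continuous_iff_continuousAt]
    intro u
    exact (Complex.continuousAt_arg (hρslit k (Finset.mem_range.mp hk) u)).comp
      (hρcont k).continuousAt
  have hexph : ∀ u, Complex.exp ((h u : ℝ) * Complex.I) = (u : ℂ) := by
    intro u
    have e1 : ((h u : ℝ) : ℂ) * Complex.I
        = ∑ k ∈ Finset.range N, ((ρ k u).arg : ℂ) * Complex.I := by
      rw [hh]
      push_cast
      rw [Finset.sum_mul]
    rw [e1, Complex.exp_sum]
    have e2 : ∀ k ∈ Finset.range N,
        Complex.exp (((ρ k u).arg : ℂ) * Complex.I) = ρ k u :=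
      fun k _ => aux_exp_arg (hρabs k u)
    rw [Finset.prod_congr rfl e2]
    have e3 := aux_telescope (fun k => F (t k, u))
      (fun k => aux_unit_mul_conj (habs (t k, u))) N
    simp only [hρ]
    rw [e3, htN, ht0, hF1, hF0]
    simp
  set e : ℝ → ↥(Metric.sphere (0 : ℂ) 1) := fun θ =>
    ⟨Complex.exp ((θ : ℂ) * Complex.I), by
      simp [mem_sphere_zero_iff_norm,
        Complex.norm_exp_ofReal_mul_I]⟩ with he
  set ψ : ℝ → ℝ := fun θ => h (e θ) - θ with hψ
  have hψcont : Continuous ψ := by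
    apply Continuous.sub _ continuous_id
    apply hhcont.comp
    apply Continuous.subtype_mk
    exact Complex.continuous_exp.comp (Complex.continuous_ofReal.mul continuous_const)
  have hψexp : ∀ θ, Complex.exp ((ψ θ : ℝ) * Complex.I) = 1 := by
    intro θ
    have e4 : ((ψ θ : ℝ) : ℂ) * Complex.I
        = (h (e θ) : ℂ) * Complex.I - (θ : ℂ) * Complex.I := by
      rw [hψ]; push_cast; ring
    rw [e4, Complex.exp_sub, hexph]
    have : ((e θ : ℂ)) = Complex.exp ((θ : ℂ) * Complex.I) := rfl
    rw [this, div_self (Complex.exp_ne_zero _)]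
  have hper : e (2 * Real.pi) = e 0 := by
    apply Subtype.ext
    show Complex.exp _ = Complex.exp _
    push_cast
    rw [Complex.exp_two_pi_mul_I]
    simp
  have hψ2π : ψ (2 * Real.pi) = ψ 0 - 2 * Real.pi := by
    rw [hψ]
    simp only [hper]
    ring
  have hsub : Set.Icc (ψ (2 * Real.pi)) (ψ 0) ⊆ ψ '' (Set.Icc 0 (2 * Real.pi)) :=
    intermediate_value_Icc' (by positivity) hψcont.continuousOn
  have hy : ψ 0 - Real.pi ∈ Set.Icc (ψ (2 * Real.pi)) (ψ 0) := by
    rw [hψ2π]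
    constructor
    · linarith [Real.pi_pos]
    · linarith [Real.pi_pos]
  obtain ⟨θ₀, _, hθ₀⟩ := hsub hy
  have e5 := hψexp θ₀
  rw [hθ₀] at e5
  have e6 := hψexp 0
  have e7 : ((ψ 0 - Real.pi : ℝ) : ℂ) * Complex.I
      = (ψ 0 : ℝ) * Complex.I - (Real.pi : ℂ) * Complex.I := by push_cast; ring
  rw [e7, Complex.exp_sub, e6, Complex.exp_pi_mul_I] at e5
  norm_num at e5

section Aux2

open Complex ComplexConjugate

private lemma aux_abs_coord (a : ↥(Metric.sphere (0 : ℂ) 1)) : ‖(a : ℂ)‖ = 1 := by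
  have h := mem_sphere_zero_iff_norm.mp a.2
  exact h

private lemma aux_abs_g (p : ↥(Metric.sphere (0 : ℂ) 1) × ↥(Metric.sphere (0 : ℂ) 1)) :
    ‖(p.1 : ℂ) * conj (p.2 : ℂ)‖ = 1 := by
  rw [norm_mul, aux_abs_coord, Complex.norm_conj, aux_abs_coord, mul_one]

private lemma aux_strongly
    (V : Set (↥(Metric.sphere (0 : ℂ) 1) × ↥(Metric.sphere (0 : ℂ) 1)))
    (A : ↥(Metric.sphere (0 : ℂ) 1) × ↥(Metric.sphere (0 : ℂ) 1) → ℝ)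
    (hA : ContinuousOn A V)
    (hexp : ∀ p ∈ V, Complex.exp ((A p : ℝ) * Complex.I) = ((p.1 : ℂ)) * conj ((p.2 : ℂ)))
    (hdiag : ∀ p ∈ V, p.1 = p.2 → A p = 0) :
    StronglyRelInessentialOn (id : ↥(Metric.sphere (0 : ℂ) 1) × ↥(Metric.sphere (0 : ℂ) 1) →
        ↥(Metric.sphere (0 : ℂ) 1) × ↥(Metric.sphere (0 : ℂ) 1)) V
      {p | p.1 = p.2} {p | p.1 = p.2} := by
  have hA' : Continuous fun y : ↥V => A y.val :=
    continuousOn_iff_continuous_restrict.mp hA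
  have hmem : ∀ (q : unitInterval × ↥V),
      ((q.2.val.2 : ℂ)) * Complex.exp
        (Complex.ofReal ((1 - (q.1 : ℝ)) * A q.2.val) * Complex.I)
        ∈ Metric.sphere (0 : ℂ) 1 := by
    intro q
    rw [mem_sphere_zero_iff_norm, norm_mul, aux_abs_coord,
      Complex.norm_exp_ofReal_mul_I, mul_one]
  refine ⟨⟨fun q => ((q.2.val.1),
      ⟨((q.2.val.2 : ℂ)) * Complex.exp
        (Complex.ofReal ((1 - (q.1 : ℝ)) * A q.2.val) * Complex.I), hmem q⟩), ?_⟩, ?_, ?_, ?_⟩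
  · refine Continuous.prodMk ?_ ?_
    · exact continuous_fst.comp (continuous_subtype_val.comp continuous_snd)
    · apply Continuous.subtype_mk
      apply Continuous.mul
      · exact continuous_subtype_val.comp
          (continuous_snd.comp (continuous_subtype_val.comp continuous_snd))
      · exact Complex.continuous_exp.comp
          ((Complex.continuous_ofReal.comp
            ((continuous_const.sub (continuous_subtype_val.comp continuous_fst)).mul
              (hA'.comp continuous_snd))).mul continuous_const)
  · intro x
    show (_, _) = id (x.val)
    rw [id_eq]
    refine Prod.ext rfl (Subtype.ext ?_)
    show ((x.val.2 : ℂ)) * Complex.exp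
      (Complex.ofReal ((1 - ((1 : unitInterval) : ℝ)) * A x.val) * Complex.I)
      = ((x.val.2 : ℂ))
    norm_num
  · intro x
    show ((x.val.1)) = _
    refine Subtype.ext ?_
    show ((x.val.1 : ℂ)) = ((x.val.2 : ℂ)) * Complex.exp
      (Complex.ofReal ((1 - ((0 : unitInterval) : ℝ)) * A x.val) * Complex.I)
    have h0 : (1 - ((0 : unitInterval) : ℝ)) * A x.val = A x.val := by norm_num
    rw [h0, hexp x.val x.2]
    calc ((x.val.1 : ℂ))
        = ((x.val.1 : ℂ)) * (((x.val.2 : ℂ)) * conj ((x.val.2 : ℂ))) := by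
          rw [aux_unit_mul_conj (aux_abs_coord _), mul_one]
      _ = ((x.val.2 : ℂ)) * (((x.val.1 : ℂ)) * conj ((x.val.2 : ℂ))) := by
          ring
  · intro t x hx
    show (_, _) = id (x.val)
    rw [id_eq]
    refine Prod.ext rfl (Subtype.ext ?_)
    show ((x.val.2 : ℂ)) * Complex.exp
      (Complex.ofReal ((1 - (t : ℝ)) * A x.val) * Complex.I) = ((x.val.2 : ℂ))
    rw [hdiag x.val x.2 hx]
    norm_num

end Aux2

section Aux3

open Complex ComplexConjugate

private lemma aux_gcont : Continuous (fun p : ↥(Metric.sphere (0 : ℂ) 1) ×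
    ↥(Metric.sphere (0 : ℂ) 1) => (p.1 : ℂ) * conj (p.2 : ℂ)) :=
  (continuous_subtype_val.comp continuous_fst).mul
    (Complex.continuous_conj.comp (continuous_subtype_val.comp continuous_snd))

private lemma aux_arg_cont : ContinuousOn Complex.arg Complex.slitPlane :=
  fun _ hz => (Complex.continuousAt_arg hz).continuousWithinAt

private lemma aux_ub : srelcatLE (id : ↥(Metric.sphere (0 : ℂ) 1) × ↥(Metric.sphere (0 : ℂ) 1) →
    ↥(Metric.sphere (0 : ℂ) 1) × ↥(Metric.sphere (0 : ℂ) 1))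
    {p | p.1 = p.2} {p | p.1 = p.2} 1 := by
  refine ⟨![{p | (p.1 : ℂ) * conj (p.2 : ℂ) ≠ -1}, {p | (p.1 : ℂ) * conj (p.2 : ℂ) ≠ 1}],
    ?_, ?_, ?_⟩
  · intro i
    fin_cases i
    · exact IsOpen.preimage aux_gcont isOpen_compl_singleton
    · exact IsOpen.preimage aux_gcont isOpen_compl_singleton
  · rw [Set.eq_univ_iff_forall]
    intro p
    rw [Set.mem_iUnion]
    by_cases h : (p.1 : ℂ) * conj (p.2 : ℂ) = -1
    · exact ⟨1, show (p.1 : ℂ) * conj (p.2 : ℂ) ≠ 1 by rw [h]; norm_num⟩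
    · exact ⟨0, h⟩
  · intro i
    fin_cases i
    · -- V 0 : ratio ≠ -1
      apply aux_strongly _ (fun p => Complex.arg ((p.1 : ℂ) * conj (p.2 : ℂ)))
      · apply ContinuousOn.comp aux_arg_cont aux_gcont.continuousOn
        intro p hp
        exact aux_slit (aux_abs_g p) hp
      · intro p _
        exact aux_exp_arg (aux_abs_g p)
      · intro p _ hd
        have h1 : (p.1 : ℂ) * conj (p.2 : ℂ) = 1 := by
          rw [hd]
          exact aux_unit_mul_conj (aux_abs_coord _)
        rw [h1, Complex.arg_one]
    · -- V 1 : ratio ≠ 1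
      apply aux_strongly _
        (fun p => Complex.arg (-((p.1 : ℂ) * conj (p.2 : ℂ))) + Real.pi)
      · apply ContinuousOn.add _ continuousOn_const
        apply ContinuousOn.comp aux_arg_cont aux_gcont.neg.continuousOn
        intro p hp
        have habs : ‖-((p.1 : ℂ) * conj (p.2 : ℂ))‖ = 1 := by
          rw [norm_neg, aux_abs_g]
        exact aux_slit habs (fun hc => hp (neg_inj.mp hc))
      · intro p _
        have habs : ‖-((p.1 : ℂ) * conj (p.2 : ℂ))‖ = 1 := by
          rw [norm_neg, aux_abs_g]
        have e1 : ((Complex.arg (-((p.1 : ℂ) * conj (p.2 : ℂ))) + Real.pi : ℝ) : ℂ)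
            * Complex.I
            = ((Complex.arg (-((p.1 : ℂ) * conj (p.2 : ℂ))) : ℝ) : ℂ) * Complex.I
              + (Real.pi : ℂ) * Complex.I := by
          push_cast
          ring
        rw [e1, Complex.exp_add, aux_exp_arg habs, Complex.exp_pi_mul_I]
        ring
      · intro p hp hd
        exfalso
        apply hp
        show (p.1 : ℂ) * conj (p.2 : ℂ) = 1
        rw [hd]
        exact aux_unit_mul_conj (aux_abs_coord _)

private lemma aux_lb : ¬ srelcatLE (id : ↥(Metric.sphere (0 : ℂ) 1) ×
    ↥(Metric.sphere (0 : ℂ) 1) → ↥(Metric.sphere (0 : ℂ) 1) × ↥(Metric.sphere (0 : ℂ) 1))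
    {p | p.1 = p.2} {p | p.1 = p.2} 0 := by
  rintro ⟨V, hVo, hVc, hVi⟩
  have hmem : ∀ p : ↥(Metric.sphere (0 : ℂ) 1) × ↥(Metric.sphere (0 : ℂ) 1), p ∈ V 0 := by
    intro p
    have hp : p ∈ ⋃ i, V i := hVc ▸ Set.mem_univ p
    obtain ⟨i, hi⟩ := Set.mem_iUnion.mp hp
    have h0 : i = 0 := Fin.ext (Nat.lt_one_iff.mp i.isLt)
    rwa [h0] at hi
  obtain ⟨H, hH1, hH0, -⟩ := hVi 0
  set one : ↥(Metric.sphere (0 : ℂ) 1) := ⟨1, by simp [mem_sphere_zero_iff_norm]⟩ with hone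
  set j : unitInterval × ↥(Metric.sphere (0 : ℂ) 1) → unitInterval × ↥(V 0) :=
    fun q => (q.1, ⟨(q.2, one), hmem _⟩) with hj
  have hjcont : Continuous j :=
    continuous_fst.prodMk
      (Continuous.subtype_mk (continuous_snd.prodMk continuous_const) _)
  set F : C(unitInterval × ↥(Metric.sphere (0 : ℂ) 1), ℂ) :=
    ⟨fun q => ((H (j q)).1 : ℂ) * conj ((H (j q)).2 : ℂ),
      ((continuous_subtype_val.comp (continuous_fst.comp (H.continuous.comp hjcont))).mul
        (Complex.continuous_conj.comp
          (continuous_subtype_val.comp (continuous_snd.comp (H.continuous.comp hjcont)))))⟩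
    with hF
  apply aux_no_null F
  · intro q
    exact aux_abs_g (H (j q))
  · intro u
    show ((H (j (1, u))).1 : ℂ) * conj ((H (j (1, u))).2 : ℂ) = (u : ℂ)
    have h1 := hH1 ⟨(u, one), hmem _⟩
    rw [hj]
    simp only
    rw [h1]
    show (u : ℂ) * conj ((1 : ℂ)) = (u : ℂ)
    rw [map_one, mul_one]
  · intro u
    show ((H (j (0, u))).1 : ℂ) * conj ((H (j (0, u))).2 : ℂ) = 1
    have h0 : (H (j (0, u))).1 = (H (j (0, u))).2 := hH0 (j (0, u)).2
    rw [h0]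
    exact aux_unit_mul_conj (aux_abs_coord _)

end Aux3

/-- for the torus `X = S¹ × S¹` and its diagonal `A`,
`srelcat(X, A) = 1`. -/
theorem srelcat_torus_diagonal :
    srelcat (id : ↥(Metric.sphere (0 : ℂ) 1) × ↥(Metric.sphere (0 : ℂ) 1) →
        ↥(Metric.sphere (0 : ℂ) 1) × ↥(Metric.sphere (0 : ℂ) 1))
      {p | p.1 = p.2} {p | p.1 = p.2} = 1 := by
  apply le_antisymm
  · exact sInf_le ⟨1, by norm_num, aux_ub⟩
  · apply le_sInf
    rintro n ⟨m, rfl, hm⟩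
    cases m with
    | zero => exact absurd hm aux_lb
    | succ k => exact_mod_cast Nat.succ_le_succ (Nat.zero_le k)
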